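/- There is no pair of functions f₁, f₂ : ℕ³ → ℕ such that for all triples (n₁,n₂,n₃), (m₁,m₂,m₃) ∈ ℕ³, if f₁(n₁,n₂,n₃) ≤ f₁(m₁,m₂,m₃) and f₂(n₁,n₂,n₃) ≤ f₂(m₁,m₂,m₃), then (n₁,n₂,n₃) ≤ (m₁,m₂,m₃). -/

import Mathlib

theorem dl_22_not_proves_dl_32 :
    ¬ ∃ f₁ f₂ : ℕ → ℕ → ℕ → ℕ, ∀ n₁ n₂ n₃ m₁ m₂ m₃ : ℕ,
      f₁ n₁ n₂ n₃ ≤ f₁ m₁ m₂ m₃ → f₂ n₁ n₂ n₃ ≤ f₂ m₁ m₂ m₃ →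
      (n₁ ≤ m₁ ∧ n₂ ≤ m₂ ∧ n₃ ≤ m₃) := by
  rintro ⟨f₁, f₂, h⟩
  set c₁ := f₁ 0 0 1 with hc₁
  set c₂ := f₂ 0 0 1 with hc₂
  set n := c₁ + c₂ + 1 with hn
  -- each point (i, n-i, 0) for i ≤ n is incomparable with (0,0,1)
  have key : ∀ i ≤ n, f₁ i (n - i) 0 < c₁ ∨ f₂ i (n - i) 0 < c₂ := by
    intro i hi
    by_contra hc
    push_neg at hc
    have := h 0 0 1 i (n - i) 0 hc.1 hc.2
    omega
  -- the points (i, n-i, 0), i ≤ n form an antichain, so f-values are distinct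
  have inj : ∀ i ≤ n, ∀ j ≤ n,
      (f₁ i (n - i) 0 = f₁ j (n - j) 0 ∨ f₂ i (n - i) 0 = f₂ j (n - j) 0) →
      i = j := by
    intro i hi j hj hor
    rcases le_total (f₁ i (n - i) 0) (f₁ j (n - j) 0) with h1 | h1
    · rcases le_total (f₂ i (n - i) 0) (f₂ j (n - j) 0) with h2 | h2
      · have := h i (n - i) 0 j (n - j) 0 h1 h2; omega
      · rcases hor with he | he
        · have := h j (n - j) 0 i (n - i) 0 (by omega) h2; omega
        · have := h i (n - i) 0 j (n - j) 0 h1 (by omega); omega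
    · rcases le_total (f₂ i (n - i) 0) (f₂ j (n - j) 0) with h2 | h2
      · rcases hor with he | he
        · have := h i (n - i) 0 j (n - j) 0 (by omega) h2; omega
        · have := h j (n - j) 0 i (n - i) 0 h1 (by omega); omega
      · have := h j (n - j) 0 i (n - i) 0 h1 h2; omega
  -- pigeonhole
  have hcard : (Finset.range (n + 1)).card ≤ (Finset.range (c₁ + c₂)).card := by
    apply Finset.card_le_card_of_injOn
      (fun i => if f₁ i (n - i) 0 < c₁ then f₁ i (n - i) 0 else c₁ + f₂ i (n - i) 0)
    · intro i hi
      simp only [Finset.coe_range, Set.mem_Iio, Finset.mem_range] at *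
      have := key i (by omega)
      split <;> omega
    · intro i hi j hj hij
      simp only [Finset.coe_range, Set.mem_Iio] at hi hj
      have ki := key i (by omega)
      have kj := key j (by omega)
      apply inj i (by omega) j (by omega)
      by_cases h1 : f₁ i (n - i) 0 < c₁ <;> by_cases h2 : f₁ j (n - j) 0 < c₁ <;>
        simp only [h1, h2, if_true, if_false, if_pos, if_neg, not_false_iff] at hij <;>
        omega
  simp only [Finset.card_range] at hcard
  omega
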